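/- For any single-qubit density matrix ρ, the modified trace distance measure of coherence equals the l₁-norm of coherence: inf_{λ ≥ 0, δ diagonal density matrix} ‖ρ − λδ‖_tr = Σ_{i≠j} |ρ_{ij}|. -/

import Mathlib

open Matrix
open scoped ComplexOrder

lemma psd_diag_nonneg {d : ℕ} {S : Matrix (Fin d) (Fin d) ℂ} (hS : S.PosSemidef) (i : Fin d) :
    0 ≤ S i i := by
  exact hS.diag_nonneg

lemma psd_det_nonneg {d : ℕ} {S : Matrix (Fin d) (Fin d) ℂ} (hS : S.PosSemidef) :
    0 ≤ S.det := by
  rw [hS.1.det_eq_prod_eigenvalues]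
  have h : (0:ℝ) ≤ ∏ i, hS.1.eigenvalues i :=
    Finset.prod_nonneg fun i _ => hS.eigenvalues_nonneg i
  rw [← RCLike.ofReal_prod]
  exact RCLike.ofReal_nonneg.mpr h

/-- The trace norm of a matrix `A`: `‖A‖_tr = Tr √(AᴴA)`. -/
noncomputable def traceNorm {d : ℕ} (A : Matrix (Fin d) (Fin d) ℂ) : ℝ :=
  (((Matrix.isHermitian_conjTranspose_mul_self A).eigenvectorUnitary.1 *
      diagonal (((↑) : ℝ → ℂ) ∘ (√·) ∘ (Matrix.isHermitian_conjTranspose_mul_self A).eigenvalues) *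
      (star (Matrix.isHermitian_conjTranspose_mul_self A).eigenvectorUnitary :
        Matrix (Fin d) (Fin d) ℂ)).trace).re

lemma traceNorm_exists_sqrt {d : ℕ} (M : Matrix (Fin d) (Fin d) ℂ) :
    ∃ S : Matrix (Fin d) (Fin d) ℂ,
      S.PosSemidef ∧ S * S = Mᴴ * M ∧ traceNorm M = (S.trace).re := by
  set hH := Matrix.isHermitian_conjTranspose_mul_self M with hHdef
  set U := hH.eigenvectorUnitary with hU
  have hev : ∀ i, 0 ≤ hH.eigenvalues i := fun i => Matrix.eigenvalues_conjTranspose_mul_self_nonneg M i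
  refine ⟨(U : Matrix (Fin d) (Fin d) ℂ) * diagonal (((↑) : ℝ → ℂ) ∘ (√·) ∘ hH.eigenvalues) *
      (star U : Matrix (Fin d) (Fin d) ℂ), ?_, ?_, rfl⟩
  · have := (Matrix.PosSemidef.diagonal (d := ((↑) : ℝ → ℂ) ∘ (√·) ∘ hH.eigenvalues)
      (Pi.le_def.mpr fun i => by simp [Real.sqrt_nonneg])).mul_mul_conjTranspose_same
      (U : Matrix (Fin d) (Fin d) ℂ)
    simpa [Unitary.coe_star, Matrix.star_eq_conjTranspose] using this
  · have hspec := hH.spectral_theorem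
    rw [Unitary.conjStarAlgAut_apply] at hspec
    calc _ = (U : Matrix (Fin d) (Fin d) ℂ) * (diagonal (((↑) : ℝ → ℂ) ∘ (√·) ∘ hH.eigenvalues) *
          ((star U : Matrix (Fin d) (Fin d) ℂ) * U) *
          diagonal (((↑) : ℝ → ℂ) ∘ (√·) ∘ hH.eigenvalues)) * (star U : Matrix (Fin d) (Fin d) ℂ) := by
          simp only [Matrix.mul_assoc]
      _ = (U : Matrix (Fin d) (Fin d) ℂ) * diagonal (RCLike.ofReal ∘ hH.eigenvalues) *
          (star U : Matrix (Fin d) (Fin d) ℂ) := by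
          rw [Unitary.coe_star_mul_self, Matrix.mul_one, diagonal_mul_diagonal]
          congr 2
          congr 1
          funext i
          simp [← Complex.ofReal_mul, Real.mul_self_sqrt (hev i)]
      _ = Mᴴ * M := hspec.symm

lemma traceNorm_nonneg {d : ℕ} (A : Matrix (Fin d) (Fin d) ℂ) : 0 ≤ traceNorm A := by
  obtain ⟨S, hS, -, htr⟩ := traceNorm_exists_sqrt A
  rw [htr, Matrix.trace, Complex.re_sum]
  refine Finset.sum_nonneg fun i _ => ?_
  exact (Complex.nonneg_iff.mp
    (psd_diag_nonneg hS i)).1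

set_option maxHeartbeats 1000000 in
lemma traceNorm_sq (M : Matrix (Fin 2) (Fin 2) ℂ) :
    traceNorm M ^ 2 = (∑ i, ∑ j, ‖M i j‖ ^ 2) + 2 * ‖M.det‖ := by
  obtain ⟨S, hS, hSS, htrS⟩ : ∃ S : Matrix (Fin 2) (Fin 2) ℂ,
      S.PosSemidef ∧ S * S = Mᴴ * M ∧ traceNorm M = (S.trace).re :=
    traceNorm_exists_sqrt M
  obtain ⟨hp, hpim⟩ := Complex.nonneg_iff.mp (psd_diag_nonneg hS 0)
  obtain ⟨hq, hqim⟩ := Complex.nonneg_iff.mp (psd_diag_nonneg hS 1)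
  set p := (S 0 0).re
  set q := (S 1 1).re
  have hs10 : S 1 0 = starRingEnd ℂ (S 0 1) := (Matrix.IsHermitian.apply hS.1 1 0).symm
  have key00 : S 0 0 * S 0 0 + S 0 1 * S 1 0
      = starRingEnd ℂ (M 0 0) * M 0 0 + starRingEnd ℂ (M 1 0) * M 1 0 := by
    have := congrFun (congrFun hSS 0) 0
    simpa [Matrix.mul_apply, Matrix.conjTranspose_apply, Fin.sum_univ_two] using this
  have key11 : S 1 0 * S 0 1 + S 1 1 * S 1 1
      = starRingEnd ℂ (M 0 1) * M 0 1 + starRingEnd ℂ (M 1 1) * M 1 1 := by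
    have := congrFun (congrFun hSS 1) 1
    simpa [Matrix.mul_apply, Matrix.conjTranspose_apply, Fin.sum_univ_two] using this
  have e1 : p ^ 2 + Complex.normSq (S 0 1)
      = Complex.normSq (M 0 0) + Complex.normSq (M 1 0) := by
    have := congrArg Complex.re key00
    rw [hs10] at this
    simp only [Complex.add_re, Complex.mul_re, Complex.conj_re, Complex.conj_im] at this
    rw [← hpim] at this
    simp only [Complex.normSq_apply]
    nlinarith [this]
  have e2 : Complex.normSq (S 0 1) + q ^ 2
      = Complex.normSq (M 0 1) + Complex.normSq (M 1 1) := by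
    have := congrArg Complex.re key11
    rw [hs10] at this
    simp only [Complex.add_re, Complex.mul_re, Complex.conj_re, Complex.conj_im] at this
    rw [← hqim] at this
    simp only [Complex.normSq_apply]
    nlinarith [this]
  obtain ⟨hdre, hdim⟩ := Complex.nonneg_iff.mp (psd_det_nonneg hS)
  have hdetSS : S.det * S.det = starRingEnd ℂ M.det * M.det := by
    rw [← Matrix.det_mul, hSS, Matrix.det_mul, Matrix.det_conjTranspose]
    rfl
  have hdet2 : (S.det.re) ^ 2 = ‖M.det‖ ^ 2 := by
    have := congrArg Complex.re hdetSS
    rw [Complex.mul_re, ← hdim] at this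
    rw [Complex.sq_norm, Complex.normSq_apply]
    simp only [Complex.mul_re, Complex.conj_re, Complex.conj_im] at this
    nlinarith [this]
  have hdet : S.det.re = ‖M.det‖ := by
    nlinarith [hdre, norm_nonneg M.det, hdet2]
  have e3 : p * q - Complex.normSq (S 0 1) = ‖M.det‖ := by
    rw [← hdet, Matrix.det_fin_two, hs10]
    simp only [Complex.sub_re, Complex.mul_re, Complex.conj_re, Complex.conj_im, ← hpim, ← hqim,
      Complex.normSq_apply]
    ring
  have htr : traceNorm M = p + q := by
    rw [htrS, Matrix.trace_fin_two, Complex.add_re]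
  rw [htr, Fin.sum_univ_two, Fin.sum_univ_two, Fin.sum_univ_two]
  have habs : ∀ i j : Fin 2, ‖M i j‖ ^ 2 = Complex.normSq (M i j) := fun i j =>
    Complex.sq_norm _
  rw [habs, habs, habs, habs]
  nlinarith [e1, e2, e3]

lemma real_sq_le {a b : ℝ} (hb : 0 ≤ b) (h : a ^ 2 ≤ b ^ 2) (_ha : 0 ≤ a) : a ≤ b := by
  nlinarith

lemma traceNorm_lower (M : Matrix (Fin 2) (Fin 2) ℂ) :
    ‖M 0 1‖ + ‖M 1 0‖ ≤ traceNorm M := by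
  have hsq := traceNorm_sq M
  rw [Fin.sum_univ_two, Fin.sum_univ_two, Fin.sum_univ_two] at hsq
  have hdet : M.det = M 0 0 * M 1 1 - M 0 1 * M 1 0 := Matrix.det_fin_two M
  have h1 : ‖M 0 1 * M 1 0‖ ≤ ‖M 0 0 * M 1 1‖ + ‖M.det‖ := by
    have heq : M 0 1 * M 1 0 = M 0 0 * M 1 1 - M.det := by rw [hdet]; ring
    rw [heq]
    exact norm_sub_le _ _
  have hm1 : ‖M 0 1 * M 1 0‖ = ‖M 0 1‖ * ‖M 1 0‖ :=
    norm_mul _ _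
  have hm2 : ‖M 0 0 * M 1 1‖ = ‖M 0 0‖ * ‖M 1 1‖ :=
    norm_mul _ _
  refine real_sq_le (traceNorm_nonneg M) ?_
    (add_nonneg (norm_nonneg _) (norm_nonneg _))
  rw [hsq]
  nlinarith [sq_nonneg (‖M 0 0‖ - ‖M 1 1‖), h1,
    h1, hm1, hm2, norm_nonneg M.det, norm_nonneg (M 0 0), norm_nonneg (M 1 1)]

/-- For any single-qubit density matrix `ρ`, the modified trace distance measure of
coherence equals the `l₁`-norm of coherence. -/
theorem modified_trace_coherence_eq_l1_qubit (ρ : Matrix (Fin 2) (Fin 2) ℂ)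
    (hρ : ρ.PosSemidef) (hρtr : ρ.trace = 1) :
    sInf {x : ℝ | ∃ (l : ℝ) (δ : Matrix (Fin 2) (Fin 2) ℂ),
        0 ≤ l ∧ δ.PosSemidef ∧ δ.trace = 1 ∧ δ.IsDiag ∧
        x = traceNorm (ρ - l • δ)}
      = ∑ i, ∑ j, (if i = j then 0 else ‖ρ i j‖) := by
  set V := ‖ρ 0 1‖ + ‖ρ 1 0‖ with hV
  have hRHS : ∑ i, ∑ j, (if i = j then (0:ℝ) else ‖ρ i j‖) = V := by
    rw [Fin.sum_univ_two, Fin.sum_univ_two, Fin.sum_univ_two]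
    norm_num [hV]
  rw [hRHS]
  -- the entry (0,1) and (1,0) of ρ - l•δ equal those of ρ
  have hentry : ∀ (l : ℝ) (δ : Matrix (Fin 2) (Fin 2) ℂ), δ.IsDiag →
      (ρ - l • δ) 0 1 = ρ 0 1 ∧ (ρ - l • δ) 1 0 = ρ 1 0 := by
    intro l δ hd
    constructor <;>
      simp [Matrix.sub_apply, Matrix.smul_apply, hd (by decide : (0:Fin 2) ≠ 1),
        hd (by decide : (1:Fin 2) ≠ 0)]
  have hlb : ∀ x ∈ {x : ℝ | ∃ (l : ℝ) (δ : Matrix (Fin 2) (Fin 2) ℂ),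
      0 ≤ l ∧ δ.PosSemidef ∧ δ.trace = 1 ∧ δ.IsDiag ∧
      x = traceNorm (ρ - l • δ)}, V ≤ x := by
    rintro x ⟨l, δ, -, -, -, hd, rfl⟩
    obtain ⟨h1, h2⟩ := hentry l δ hd
    have := traceNorm_lower (ρ - l • δ)
    rwa [h1, h2] at this
  -- membership: take l = 1, δ = diagonal part of ρ
  have hmem : V ∈ {x : ℝ | ∃ (l : ℝ) (δ : Matrix (Fin 2) (Fin 2) ℂ),
      0 ≤ l ∧ δ.PosSemidef ∧ δ.trace = 1 ∧ δ.IsDiag ∧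
      x = traceNorm (ρ - l • δ)} := by
    refine ⟨1, Matrix.diagonal (fun i => ρ i i), zero_le_one,
      Matrix.PosSemidef.diagonal (fun i => psd_diag_nonneg hρ i),
      ?_, Matrix.isDiag_diagonal _, ?_⟩
    · rw [Matrix.trace_diagonal, ← hρtr]
      rfl
    · set M := ρ - (1:ℝ) • Matrix.diagonal (fun i => ρ i i) with hM
      have h00 : M 0 0 = 0 := by simp [hM]
      have h11 : M 1 1 = 0 := by simp [hM]
      have h01 : M 0 1 = ρ 0 1 := (hentry 1 _ (Matrix.isDiag_diagonal _)).1
      have h10 : M 1 0 = ρ 1 0 := (hentry 1 _ (Matrix.isDiag_diagonal _)).2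
      have hdet : ‖M.det‖ = ‖ρ 0 1‖ * ‖ρ 1 0‖ := by
        rw [Matrix.det_fin_two, h00, h11, h01, h10]
        simp [norm_mul]
      have hsq := traceNorm_sq M
      rw [Fin.sum_univ_two, Fin.sum_univ_two, Fin.sum_univ_two, h00, h11, h01, h10, hdet] at hsq
      have ht : 0 ≤ traceNorm M := traceNorm_nonneg M
      have hVnn : 0 ≤ V := add_nonneg (norm_nonneg _) (norm_nonneg _)
      have : traceNorm M ^ 2 = V ^ 2 := by
        rw [hsq, hV]; simp; ring
      nlinarith [this, ht, hVnn]
  exact le_antisymm (csInf_le ⟨V, hlb⟩ hmem) (le_csInf ⟨V, hmem⟩ hlb)
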